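/- The 4×4 matrix whose rows are given in equation (e:physp3) of the paper (with entries 1 + (γ−1)M²/2, −(1+(γ−1)M²)u_x/‖U‖², etc.) is the inverse (up to the sign and scaling conventions of the paper) of the matrix whose columns are the four physical source vectors δR¹, δR², δR³, δR⁴ divided by ε; that is, multiplying the two matrices yields the 4×4 identity. -/

import Mathlib

/- The matrix of equation (e:physp3) of the paper is the inverse of the matrix whose
columns are the four physical source vectors δR¹/ε, …, δR⁴/ε: their product is the
4×4 identity. -/
set_option maxHeartbeats 2000000 in
theorem giles_pierce_matrix_inverse (γ ρ p u v c M H p0 : ℝ)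
    (hγ : 1 < γ) (hρ : 0 < ρ) (hp : 0 < p) (hp0 : 0 < p0)
    (hc : c^2 = γ * p / ρ) (hcpos : 0 < c)
    (hM : 0 < M) (hMc : M^2 * c^2 = u^2 + v^2) (hU : 0 < u^2 + v^2)
    (hH : H = c^2/(γ-1) + (u^2+v^2)/2) :
    (!![1+(γ-1)*M^2/2, -((1+(γ-1)*M^2)*u/(u^2+v^2)), -((1+(γ-1)*M^2)*v/(u^2+v^2)), (1+(γ-1)*M^2/2)/H;
        0, -(v/(ρ*(u^2+v^2))), u/(ρ*(u^2+v^2)), 0;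
        -H, 0, 0, 1;
        -(γ*p0*M^2/2), γ*p0*u/c^2, γ*p0*v/c^2, -(γ*p0*M^2/(2*H))] : Matrix (Fin 4) (Fin 4) ℝ) *
    (!![1, u, v, H;
        0, -(ρ*v), ρ*u, 0;
        -(1/(2*H)), 0, 0, 1/2;
        (1/p0) * ((γ-1)/γ + 1/(γ*M^2)),
          (u/p0) * ((γ-1)/γ + 2/(γ*M^2)),
          (v/p0) * ((γ-1)/γ + 2/(γ*M^2)),
          (H/p0) * ((γ-1)/γ + 1/(γ*M^2))] : Matrix (Fin 4) (Fin 4) ℝ).transpose = 1 := by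
  have hT : (!![1, u, v, H;
        0, -(ρ*v), ρ*u, 0;
        -(1/(2*H)), 0, 0, 1/2;
        (1/p0) * ((γ-1)/γ + 1/(γ*M^2)),
          (u/p0) * ((γ-1)/γ + 2/(γ*M^2)),
          (v/p0) * ((γ-1)/γ + 2/(γ*M^2)),
          (H/p0) * ((γ-1)/γ + 1/(γ*M^2))] : Matrix (Fin 4) (Fin 4) ℝ).transpose =
      !![1, 0, -(1/(2*H)), (1/p0) * ((γ-1)/γ + 1/(γ*M^2));
         u, -(ρ*v), 0, (u/p0) * ((γ-1)/γ + 2/(γ*M^2));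
         v, ρ*u, 0, (v/p0) * ((γ-1)/γ + 2/(γ*M^2));
         H, 0, 1/2, (H/p0) * ((γ-1)/γ + 1/(γ*M^2))] := by
    ext i j; fin_cases i <;> fin_cases j <;> rfl
  rw [hT]
  have hγ1 : (0:ℝ) < γ - 1 := by linarith
  have hγ' : γ ≠ 0 := by positivity
  have hH0 : 0 < H := by
    rw [hH]
    have := div_pos (pow_pos hcpos 2) hγ1
    linarith
  have hH' : H ≠ 0 := ne_of_gt hH0
  have hU' : u^2+v^2 ≠ 0 := ne_of_gt hU
  have hM' : M ≠ 0 := ne_of_gt hM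
  have hc' : c ≠ 0 := ne_of_gt hcpos
  have hρ' : ρ ≠ 0 := ne_of_gt hρ
  have hp0' : p0 ≠ 0 := ne_of_gt hp0
  ext i j
  fin_cases i <;> fin_cases j <;>
    simp [Matrix.mul_apply, Fin.sum_univ_four, Matrix.one_apply] <;>
    field_simp <;> ring_nf <;>
    first
      | linear_combination (-(γ*p0*c^2*H*4)) * hMc
      | linear_combination (-(p0^4*c^2*H*(8*γ^8*M^6 - 4*γ^8*M^8 + 4*γ^9*M^8))) * hMc
      | linear_combination (-(2*γ*p0)) * hMc
      | linear_combination (-(2*M^2*γ - 2*M^2 + 4)) * hMc
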